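/- Let X be a Banach space and let U be a weakly exponentially unstable evolution operator on X, with constants N ≥ 1 and ν > 0. Define L(t,s,x) = −∫_s^t ‖U(τ,s)x‖² dτ for (t,s) ∈ T and x ∈ X. Then L is a nonpositive Lyapunov function for U, and with m = N²/(2ν) > 0, for each x₀ ∈ X there is t₀ ≥ 0 such that |L(t,t₀,x₀)| ≤ m‖U(t,t₀)x₀‖² for all t ≥ t₀. -/

import Mathlib

/-- An evolution operator on a Banach space `X`. -/
structure EvolutionOperator (X : Type*) [NormedAddCommGroup X] [NormedSpace ℝ X] where
  U : ℝ → ℝ → X →L[ℝ] X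
  isId : ∀ t : ℝ, 0 ≤ t → U t t = ContinuousLinearMap.id ℝ X
  cocycle : ∀ t s t₀ : ℝ, 0 ≤ t₀ → t₀ ≤ s → s ≤ t → ∀ x : X, U t s (U s t₀ x) = U t t₀ x
  cont : ∀ x : X, ContinuousOn (fun p : ℝ × ℝ => U p.1 p.2 x)
    {p : ℝ × ℝ | 0 ≤ p.2 ∧ p.2 ≤ p.1}

lemma EvolutionOperator.normSq_contOn {X : Type*} [NormedAddCommGroup X] [NormedSpace ℝ X]
    (E : EvolutionOperator X) (x : X) {s : ℝ} (hs : 0 ≤ s) :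
    ContinuousOn (fun τ => ‖E.U τ s x‖ ^ 2) (Set.Ici s) := by
  have h := E.cont x
  have hmap : ∀ τ ∈ Set.Ici s, ((τ, s) : ℝ × ℝ) ∈ {p : ℝ × ℝ | 0 ≤ p.2 ∧ p.2 ≤ p.1} :=
    fun τ hτ => ⟨hs, hτ⟩
  have hc : ContinuousOn (fun τ : ℝ => E.U τ s x) (Set.Ici s) :=
    h.comp (Continuous.continuousOn (by continuity)) hmap
  exact hc.norm.pow 2

lemma EvolutionOperator.intInt {X : Type*} [NormedAddCommGroup X] [NormedSpace ℝ X]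
    (E : EvolutionOperator X) (x : X) {s a b : ℝ} (hs : 0 ≤ s) (ha : s ≤ a) (hb : s ≤ b) :
    IntervalIntegrable (fun τ => ‖E.U τ s x‖ ^ 2) MeasureTheory.volume a b := by
  apply ((E.normSq_contOn x hs).mono _).intervalIntegrable
  intro τ hτ
  rcases Set.mem_uIcc.mp hτ with h | h
  · exact le_trans ha h.1
  · exact le_trans hb h.1

theorem lyapunov_necessity
    {X : Type*} [NormedAddCommGroup X] [NormedSpace ℝ X] [CompleteSpace X]
    (E : EvolutionOperator X) (N ν : ℝ) (hN : 1 ≤ N) (hν : 0 < ν)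
    (hweak : ∀ x₀ : X, ∃ t₀ : ℝ, 0 ≤ t₀ ∧ ∀ s t : ℝ, t₀ ≤ s → s ≤ t →
      N * ‖E.U t t₀ x₀‖ ≥ Real.exp (ν * (t - s)) * ‖E.U s t₀ x₀‖)
    (L : ℝ → ℝ → X → ℝ)
    (hL : ∀ t s : ℝ, ∀ x : X, L t s x = -(∫ τ in s..t, ‖E.U τ s x‖ ^ 2)) :
    (∀ t s : ℝ, ∀ x : X, 0 ≤ s → s ≤ t → L t s x ≤ 0) ∧
    ∀ x₀ : X, ∃ t₀ : ℝ, 0 ≤ t₀ ∧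
      (∀ s t : ℝ, t₀ ≤ s → s ≤ t →
        L t t₀ x₀ + (∫ τ in s..t, ‖E.U τ t₀ x₀‖ ^ 2) = L s t₀ x₀) ∧
      (∀ t : ℝ, t₀ ≤ t → |L t t₀ x₀| ≤ (N ^ 2 / (2 * ν)) * ‖E.U t t₀ x₀‖ ^ 2) := by
  constructor
  · intro t s x hs hst
    rw [hL]
    simp only [neg_nonpos]
    exact intervalIntegral.integral_nonneg hst (fun τ _ => by positivity)
  · intro x₀
    obtain ⟨t₀, ht₀, hw⟩ := hweak x₀
    refine ⟨t₀, ht₀, ?_, ?_⟩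
    · intro s t hs hst
      rw [hL, hL]
      have hadd := intervalIntegral.integral_add_adjacent_intervals
        (E.intInt x₀ ht₀ le_rfl hs) (E.intInt x₀ ht₀ hs (hs.trans hst))
      linarith [hadd]
    · intro t ht
      rw [hL]
      have hnn : 0 ≤ ∫ τ in t₀..t, ‖E.U τ t₀ x₀‖ ^ 2 :=
        intervalIntegral.integral_nonneg ht (fun τ _ => by positivity)
      rw [abs_neg, abs_of_nonneg hnn]
      -- pointwise bound
      set C := ‖E.U t t₀ x₀‖
      have hCnn : (0:ℝ) ≤ C := norm_nonneg _
      have hpt : ∀ τ ∈ Set.Icc t₀ t,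
          ‖E.U τ t₀ x₀‖ ^ 2 ≤ N ^ 2 * C ^ 2 * Real.exp (2 * ν * (τ - t)) := by
        intro τ hτ
        have h1 := hw τ t hτ.1 hτ.2
        have h2 : ‖E.U τ t₀ x₀‖ ≤ N * C * Real.exp (ν * (τ - t)) := by
          have key : Real.exp (ν * (t - τ)) * Real.exp (ν * (τ - t)) = 1 := by
            rw [← Real.exp_add, show ν * (t - τ) + ν * (τ - t) = 0 by ring, Real.exp_zero]
          have h3 := mul_le_mul_of_nonneg_right (ge_iff_le.mp h1)
            (Real.exp_pos (ν * (τ - t))).le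
          calc ‖E.U τ t₀ x₀‖
              = Real.exp (ν * (t - τ)) * ‖E.U τ t₀ x₀‖ * Real.exp (ν * (τ - t)) := by
                rw [mul_comm (Real.exp (ν * (t - τ))), mul_assoc, key, mul_one]
            _ ≤ N * C * Real.exp (ν * (τ - t)) := h3
        calc ‖E.U τ t₀ x₀‖ ^ 2 ≤ (N * C * Real.exp (ν * (τ - t))) ^ 2 := by
              apply pow_le_pow_left₀ (norm_nonneg _) h2
          _ = N ^ 2 * C ^ 2 * Real.exp (2 * ν * (τ - t)) := by
              rw [mul_pow, mul_pow, sq (Real.exp _), ← Real.exp_add]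
              ring_nf
      have hint2 : IntervalIntegrable (fun τ => N ^ 2 * C ^ 2 * Real.exp (2 * ν * (τ - t)))
          MeasureTheory.volume t₀ t := Continuous.intervalIntegrable (by continuity) t₀ t
      have hmono := intervalIntegral.integral_mono_on ht
        (E.intInt x₀ ht₀ le_rfl ht) hint2 hpt
      -- compute the exponential integral
      have hder : ∀ τ ∈ Set.uIcc t₀ t,
          HasDerivAt (fun τ => Real.exp (2 * ν * (τ - t)) / (2 * ν))
            (Real.exp (2 * ν * (τ - t))) τ := by
        intro τ _
        have h1 : HasDerivAt (fun τ : ℝ => 2 * ν * (τ - t)) (2 * ν) τ := by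
          simpa using ((hasDerivAt_id τ).sub_const t).const_mul (2 * ν)
        have h2 := h1.exp
        have h3 := h2.div_const (2 * ν)
        convert h3 using 1
        all_goals first | rfl | (rw [mul_div_cancel_right₀ _ (by positivity)])
      have hintexp : IntervalIntegrable (fun τ => Real.exp (2 * ν * (τ - t)))
          MeasureTheory.volume t₀ t := Continuous.intervalIntegrable (by continuity) t₀ t
      have hcalc := intervalIntegral.integral_eq_sub_of_hasDerivAt hder hintexp
      have hval : (∫ τ in t₀..t, Real.exp (2 * ν * (τ - t))) ≤ 1 / (2 * ν) := by
        rw [hcalc]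
        have : (0:ℝ) ≤ Real.exp (2 * ν * (t₀ - t)) / (2 * ν) := by positivity
        simp only [sub_self, mul_zero, Real.exp_zero]
        linarith
      have hfinal : (∫ τ in t₀..t, N ^ 2 * C ^ 2 * Real.exp (2 * ν * (τ - t)))
          ≤ N ^ 2 / (2 * ν) * C ^ 2 := by
        rw [intervalIntegral.integral_const_mul]
        have hNC : (0:ℝ) ≤ N ^ 2 * C ^ 2 := by positivity
        calc N ^ 2 * C ^ 2 * ∫ τ in t₀..t, Real.exp (2 * ν * (τ - t))
            ≤ N ^ 2 * C ^ 2 * (1 / (2 * ν)) := by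
              exact mul_le_mul_of_nonneg_left hval hNC
          _ = N ^ 2 / (2 * ν) * C ^ 2 := by ring
      exact hmono.trans hfinal
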